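/- Let n ∈ ℤ, n ≠ 0, and let x : (0,∞) → ℝ³ be twice differentiable with x(t) ≠ 0, satisfying x''(t) + t^{-(n+2)/2} ‖x(t)‖^{n-2} x(t) = 0. Then the function I(t) = 2t (½‖x'(t)‖² + (1/n) t^{-(n+2)/2}‖x(t)‖ⁿ) - ⟨x(t), x'(t)⟩ is constant. -/

import Mathlib

open Real RealInnerProductSpace

theorem central_noether_integral
    (n : ℤ) (hn : n ≠ 0)
    (x : ℝ → EuclideanSpace ℝ (Fin 3))
    (hx : ∀ t > (0:ℝ), DifferentiableAt ℝ x t)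
    (hx' : ∀ t > (0:ℝ), DifferentiableAt ℝ (deriv x) t)
    (hne : ∀ t > (0:ℝ), x t ≠ 0)
    (heq : ∀ t > (0:ℝ),
      deriv (deriv x) t
        + (t ^ (-((n:ℝ) + 2) / 2) * ‖x t‖ ^ (n - 2)) • x t = 0)
    (I : ℝ → ℝ)
    (hI : ∀ t, I t = 2 * t * ((1/2) * ‖deriv x t‖ ^ 2
        + (1 / (n:ℝ)) * t ^ (-((n:ℝ) + 2) / 2) * ‖x t‖ ^ (n : ℤ))
        - ⟪x t, deriv x t⟫) :
    ∀ t₁ > (0:ℝ), ∀ t₂ > (0:ℝ), I t₁ = I t₂ := by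
  have hnR : (n:ℝ) ≠ 0 := Int.cast_ne_zero.mpr hn
  -- the key derivative computation
  have key : ∀ t > (0:ℝ), HasDerivAt I 0 t := by
    intro t ht
    set α : ℝ := -((n:ℝ) + 2) / 2 with hα
    have hxd : HasDerivAt x (deriv x t) t := (hx t ht).hasDerivAt
    have hx'd : HasDerivAt (deriv x) (deriv (deriv x) t) t := (hx' t ht).hasDerivAt
    set x' := deriv x t with hx'def
    set x'' := deriv (deriv x) t with hx''def
    set r : ℝ := ‖x t‖ with hrdef
    have hr : 0 < r := norm_pos_iff.mpr (hne t ht)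
    set c : ℝ := t ^ α * r ^ (n - 2) with hc
    have hxx : x'' = -(c • x t) := by
      have := heq t ht
      rw [add_eq_zero_iff_eq_neg] at this
      exact this
    set p : ℝ := ⟪x t, x'⟫ with hp
    set k : ℝ := ⟪x', x'⟫ with hk
    -- derivative of the norm
    have hN : HasDerivAt (fun u => ⟪x u, x u⟫) (2 * p) t := by
      have := hxd.inner ℝ hxd
      refine this.congr_deriv (Eq.symm ?_)
      rw [real_inner_comm (x t) x']; ring
    have hinner_pos : (0:ℝ) < ⟪x t, x t⟫ := by
      rw [real_inner_self_eq_norm_sq]; positivity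
    have hr' : HasDerivAt (fun u => ‖x u‖) (p / r) t := by
      have h2 := hN.sqrt hinner_pos.ne'
      have hfun : (fun u => Real.sqrt ⟪x u, x u⟫) = fun u => ‖x u‖ := by
        funext u
        rw [real_inner_self_eq_norm_sq, Real.sqrt_sq (norm_nonneg _)]
      have hval : Real.sqrt ⟪x t, x t⟫ = r := by
        rw [real_inner_self_eq_norm_sq, Real.sqrt_sq (norm_nonneg _)]
      rw [hfun, hval] at h2
      convert h2 using 1
      field_simp
    -- derivative of ‖x u‖ ^ n
    have hz : HasDerivAt (fun u => ‖x u‖ ^ (n:ℤ)) ((n:ℝ) * r ^ (n - 1) * (p / r)) t := by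
      have := (hasDerivAt_zpow n r (Or.inl hr.ne')).comp t hr'
      exact this
    -- derivative of u ^ α
    have hs : HasDerivAt (fun u : ℝ => u ^ α) (α * t ^ (α - 1)) t :=
      Real.hasDerivAt_rpow_const (Or.inl ht.ne')
    -- derivative of the kinetic term
    have hK : HasDerivAt (fun u => ⟪deriv x u, deriv x u⟫) (⟪x', x''⟫ + ⟪x'', x'⟫) t :=
      hx'd.inner ℝ hx'd
    -- assemble
    have hpot := (hs.const_mul (1 / (n:ℝ))).mul hz
    have hsum := (hK.const_mul (1/2:ℝ)).add hpot
    have h2t : HasDerivAt (fun u : ℝ => 2 * u) 2 t := by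
      simpa using (hasDerivAt_id t).const_mul (2:ℝ)
    have hmain := h2t.mul hsum
    have hP : HasDerivAt (fun u => ⟪x u, deriv x u⟫) (⟪x t, x''⟫ + ⟪x', x'⟫) t :=
      hxd.inner ℝ hx'd
    have htot := hmain.sub hP
    have hIfun : I = fun u => 2 * u * ((1/2) * ⟪deriv x u, deriv x u⟫
        + (1 / (n:ℝ)) * u ^ α * ‖x u‖ ^ (n:ℤ)) - ⟪x u, deriv x u⟫ := by
      funext u
      rw [hI u, real_inner_self_eq_norm_sq]
    rw [hIfun]
    refine htot.congr_deriv (Eq.symm ?_)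
    simp only [Pi.add_apply, Pi.mul_apply]
    -- now prove 0 = the messy derivative
    rw [hxx]
    simp only [inner_neg_left, inner_neg_right, real_inner_smul_left, real_inner_smul_right,
      real_inner_self_eq_norm_sq, ← hrdef, ← hp, hc]
    rw [← hx'def]
    have hcomm : ⟪x', x t⟫ = p := by rw [hp, real_inner_comm]
    rw [hcomm]
    have e1 : t ^ (α - 1) = t ^ α / t := by
      rw [Real.rpow_sub ht, Real.rpow_one]
    have e2 : r ^ (n - 1) = r ^ (n:ℤ) / r := by
      rw [zpow_sub₀ hr.ne', zpow_one]
    have e3 : r ^ (n - 2) = r ^ (n:ℤ) / r ^ 2 := by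
      rw [zpow_sub₀ hr.ne']
      norm_num [zpow_two, sq]
    have hta : t ^ α ≠ 0 := (Real.rpow_pos_of_pos ht α).ne'
    rw [e1, e2, e3, hα]
    field_simp
    ring
  -- conclude constancy
  have half : ∀ a > (0:ℝ), ∀ b, a ≤ b → I b = I a := by
    intro a ha b hab
    have hcont : ContinuousOn I (Set.Icc a b) := fun y hy =>
      ((key y (lt_of_lt_of_le ha hy.1)).continuousAt).continuousWithinAt
    have hder : ∀ y ∈ Set.Ico a b, HasDerivWithinAt I 0 (Set.Ici y) y := fun y hy =>
      (key y (lt_of_lt_of_le ha hy.1)).hasDerivWithinAt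
    exact constant_of_has_deriv_right_zero hcont hder b (Set.right_mem_Icc.mpr hab)
  intro t₁ ht₁ t₂ ht₂
  rcases le_total t₁ t₂ with h | h
  · exact (half t₁ ht₁ t₂ h).symm
  · exact half t₂ ht₂ t₁ h
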